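/- If two Heisenberg-Weyl displacement amplitudes α, α' satisfy |α×α'| = (π/2)(2n+1) for some nonnegative integer n, then the corresponding Heisenberg-Weyl observables anticommute: Q(α)Q(α') + Q(α')Q(α) = 0. -/

import Mathlib

open Matrix Complex BigOperators
open Fin.NatCast Fin.CommRing

/-- The clock operator `Z` on `ℂ^d`: `Z|j⟩ = e^{2πij/d}|j⟩`. -/
noncomputable def Zmat (d : ℕ) : Matrix (Fin d) (Fin d) ℂ :=
  Matrix.diagonal fun j => Complex.exp (2 * (Real.pi : ℂ) * Complex.I * ((j : ℕ) : ℂ) / (d : ℂ))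

/-- The shift operator `X` on `ℂ^d`: `X|j⟩ = |j+1 mod d⟩`. -/
noncomputable def Xmat (d : ℕ) [NeZero d] : Matrix (Fin d) (Fin d) ℂ :=
  Matrix.of fun j k : Fin d => if j = k + 1 then 1 else 0

/-- Discrete Heisenberg–Weyl displacement operator `D(l,m) = Z^l X^m e^{-iπlm/d}`. -/
noncomputable def Dmat (d : ℕ) [NeZero d] (l m : ℕ) : Matrix (Fin d) (Fin d) ℂ :=
  Complex.exp (-((Real.pi : ℂ) * Complex.I * (l : ℂ) * (m : ℂ) / (d : ℂ))) • (Zmat d ^ l * Xmat d ^ m)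

/-- Heisenberg–Weyl observable `Q(l,m) = χ D(l,m) + χ* D(l,m)†` with `χ = (1+i)/2`. -/
noncomputable def Qmat (d : ℕ) [NeZero d] (l m : ℕ) : Matrix (Fin d) (Fin d) ℂ :=
  ((1 + Complex.I) / 2) • Dmat d l m + ((1 - Complex.I) / 2) • (Dmat d l m)ᴴ

/-- Displacement amplitude `α = √(π/d) (m + i l)` in discrete phase space. -/
noncomputable def amp (d l m : ℕ) : ℂ :=
  ((Real.sqrt (Real.pi / d) : ℝ) : ℂ) * ((m : ℂ) + (l : ℂ) * Complex.I)

/-- The phase-space cross product `α × α' = Im (α conj(α'))`. -/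
noncomputable def ampCross (d l m l' m' : ℕ) : ℝ :=
  (amp d l m * (starRingEnd ℂ) (amp d l' m')).im

noncomputable def hwω (d : ℕ) : ℂ := Complex.exp (2 * (Real.pi:ℂ) * Complex.I / d)

lemma hwω_ne_zero (d : ℕ) : hwω d ≠ 0 := Complex.exp_ne_zero _

lemma hwω_zpow (d : ℕ) (e : ℤ) : hwω d ^ e = Complex.exp ((e:ℂ) * (2 * (Real.pi:ℂ) * Complex.I / d)) :=
  (Complex.exp_int_mul _ e).symm

lemma hwω_pow_d (d : ℕ) [NeZero d] : hwω d ^ (d:ℤ) = 1 := by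
  rw [hwω_zpow]
  have hd : (d:ℂ) ≠ 0 := Nat.cast_ne_zero.mpr (NeZero.ne d)
  push_cast
  rw [mul_comm, div_mul_cancel₀ _ hd]
  exact Complex.exp_two_pi_mul_I

lemma hwω_congr (d : ℕ) [NeZero d] {x y : ℤ} (h : (d:ℤ) ∣ (x - y)) : hwω d ^ x = hwω d ^ y := by
  obtain ⟨k, hk⟩ := h
  have : x = y + d * k := by linarith
  rw [this, zpow_add₀ (hwω_ne_zero d), _root_.zpow_mul, hwω_pow_d, _root_.one_zpow, mul_one]

lemma hwω_natCast (d : ℕ) (a : ℕ) : hwω d ^ (a:ℤ) = hwω d ^ a := zpow_natCast _ a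

lemma Zmat_eq (d : ℕ) : Zmat d = Matrix.diagonal fun j : Fin d => hwω d ^ (j:ℕ) := by
  have : (fun j : Fin d => Complex.exp (2 * (Real.pi:ℂ) * Complex.I * ((j:ℕ):ℂ) / (d:ℂ)))
      = fun j : Fin d => hwω d ^ (j:ℕ) := by
    funext j
    unfold hwω
    rw [← Complex.exp_nat_mul]
    ring_nf
  unfold Zmat
  rw [this]

lemma Zmat_pow (d : ℕ) (a : ℕ) :
    Zmat d ^ a = Matrix.diagonal fun j : Fin d => hwω d ^ (a * (j:ℕ)) := by
  rw [Zmat_eq, Matrix.diagonal_pow]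
  have : ((fun j : Fin d => hwω d ^ (j:ℕ)) ^ a) = fun j : Fin d => hwω d ^ (a * (j:ℕ)) := by
    funext j
    simp [Pi.pow_apply, ← pow_mul, mul_comm]
  rw [this]

lemma Xmat_pow (d : ℕ) [NeZero d] (b : ℕ) :
    Xmat d ^ b = Matrix.of fun j k : Fin d => if j = k + (b : Fin d) then 1 else 0 := by
  induction b with
  | zero => ext j k; simp [Matrix.one_apply]
  | succ b ih =>
    rw [pow_succ, ih]
    ext j k
    unfold Xmat
    rw [Matrix.mul_apply]
    simp only [Matrix.of_apply]
    rw [Finset.sum_eq_single (k+1)]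
    · simp [add_assoc, add_comm (1 : Fin d)]
    · intro t _ ht; simp [ht]
    · simp

lemma val_add_cast (d : ℕ) [NeZero d] (x : Fin d) (c : ℕ) :
    (d:ℤ) ∣ (((x + (c : Fin d)).val : ℤ) - ((x.val : ℤ) + c)) := by
  have h1 : (x + (c : Fin d)).val = (x.val + ((c : Fin d)).val) % d := Fin.val_add _ _
  have h2 : ((c : Fin d)).val = c % d := Fin.val_natCast _ _
  have h3 : (x + (c : Fin d)).val ≡ x.val + c [MOD d] := by
    rw [h1, h2]
    exact (Nat.mod_modEq _ d).trans (Nat.ModEq.add_left _ (Nat.mod_modEq c d))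
  have h4 := (Int.natCast_modEq_iff.mpr h3).symm.dvd
  push_cast at h4 ⊢
  exact h4

lemma ZXmul (d : ℕ) [NeZero d] (a b a' b' : ℕ) :
    (Zmat d ^ a * Xmat d ^ b) * (Zmat d ^ a' * Xmat d ^ b')
      = hwω d ^ (-((a':ℤ) * b)) • (Zmat d ^ (a + a') * Xmat d ^ (b + b')) := by
  rw [Zmat_pow, Xmat_pow, Zmat_pow, Xmat_pow, Zmat_pow, Xmat_pow]
  ext j k
  rw [Matrix.mul_apply]
  simp only [Matrix.smul_apply, Matrix.diagonal_mul, Matrix.of_apply, smul_eq_mul]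
  rw [Finset.sum_eq_single (k + (b' : Fin d))]
  · have hcond : (j = k + (b' : Fin d) + (b : Fin d)) ↔ (j = k + ((b + b' : ℕ) : Fin d)) := by
      constructor <;> intro hh <;> rw [hh] <;> push_cast <;> ring
    by_cases hj : j = k + (b' : Fin d) + (b : Fin d)
    · simp only [if_pos hj, if_pos (hcond.mp hj), if_pos rfl, if_true, mul_one]
      rw [← hwω_natCast, ← hwω_natCast, ← hwω_natCast,
        ← zpow_add₀ (hwω_ne_zero d), ← zpow_add₀ (hwω_ne_zero d)]
      apply hwω_congr
      obtain ⟨t, ht⟩ := val_add_cast d (k + (b' : Fin d)) b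
      refine ⟨(-(a':ℤ)) * t, ?_⟩
      have hjval : ((j.val : ℤ)) = (((k + (b' : Fin d) + (b : Fin d)).val : ℤ)) := by
        rw [hj]
      push_cast at ht hjval ⊢
      linear_combination (-(a':ℤ)) * ht + (-(a':ℤ)) * hjval
    · rw [if_neg hj, if_neg (fun hc => hj (hcond.mpr hc))]
      simp
  · intro t _ ht
    simp [if_neg ht]
  · simp

lemma ZX_anticomm (d : ℕ) [NeZero d] (a b a' b' : ℕ)
    (hph : hwω d ^ ((a:ℤ) * b' - (a':ℤ) * b) = -1) :
    (Zmat d ^ a * Xmat d ^ b) * (Zmat d ^ a' * Xmat d ^ b')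
      + (Zmat d ^ a' * Xmat d ^ b') * (Zmat d ^ a * Xmat d ^ b) = 0 := by
  rw [ZXmul, ZXmul, add_comm a' a, add_comm b' b, ← add_smul]
  have : hwω d ^ (-((a':ℤ) * b)) = - hwω d ^ (-((a:ℤ) * b')) := by
    rw [show (-((a':ℤ) * b)) = ((a:ℤ) * b' - (a':ℤ) * b) + (-((a:ℤ) * b')) by ring,
      zpow_add₀ (hwω_ne_zero d), hph]
    ring
  rw [this, neg_add_cancel, zero_smul]

lemma smul_anticomm {d : ℕ} {M N : Matrix (Fin d) (Fin d) ℂ} (h : M * N + N * M = 0)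
    (s t : ℂ) : (s • M) * (t • N) + (t • N) * (s • M) = 0 := by
  rw [Matrix.smul_mul, Matrix.mul_smul, Matrix.smul_mul, Matrix.mul_smul, smul_smul, smul_smul,
    mul_comm t s, ← smul_add, h, smul_zero]

lemma Zpow_conjTranspose (d : ℕ) [NeZero d] (a : ℕ) :
    (Zmat d ^ a)ᴴ = Zmat d ^ ((d-1) * a) := by
  rw [Zmat_pow, Zmat_pow, Matrix.diagonal_conjTranspose]
  apply congrArg Matrix.diagonal
  funext j
  show star (hwω d ^ (a * (j:ℕ))) = hwω d ^ ((d-1) * a * (j:ℕ))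
  have hstar : (starRingEnd ℂ) (hwω d ^ ((a * (j:ℕ) : ℕ):ℤ)) = hwω d ^ (-((a * (j:ℕ) : ℕ) : ℤ)) := by
    rw [hwω_zpow, hwω_zpow, ← Complex.exp_conj]
    congr 1
    simp only [_root_.map_mul, map_div₀, map_ofNat, map_intCast, Complex.conj_I, Complex.conj_ofReal,
      map_natCast]
    push_cast
    ring
  rw [show star (hwω d ^ (a * (j:ℕ))) = (starRingEnd ℂ) (hwω d ^ ((a * (j:ℕ) : ℕ):ℤ)) by
      rw [hwω_natCast]; rfl,
    hstar, ← hwω_natCast]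
  apply hwω_congr
  have hd : 1 ≤ d := NeZero.pos d
  refine ⟨-((a:ℤ) * j), ?_⟩
  push_cast [Nat.cast_sub hd]
  ring

lemma Xpow_conjTranspose (d : ℕ) [NeZero d] (b : ℕ) :
    (Xmat d ^ b)ᴴ = Xmat d ^ ((d-1) * b) := by
  have hd : 1 ≤ d := NeZero.pos d
  have hkey : ((b : Fin d)) + (((d-1) * b : ℕ) : Fin d) = 0 := by
    push_cast
    rw [show ((b:Fin d)) + ((d-1 : ℕ) : Fin d) * (b : Fin d)
        = ((1 + (d-1) : ℕ) : Fin d) * (b : Fin d) by push_cast; ring,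
      show 1 + (d-1) = d by omega, Fin.natCast_self, zero_mul]
  rw [Xmat_pow, Xmat_pow]
  ext j k
  rw [Matrix.conjTranspose_apply, Matrix.of_apply, Matrix.of_apply]
  have hiff : (k = j + (b : Fin d)) ↔ (j = k + (((d-1) * b : ℕ) : Fin d)) := by
    constructor <;> intro hh <;> rw [hh]
    · rw [add_assoc, hkey, add_zero]
    · rw [add_assoc, add_comm (((d-1)*b : ℕ) : Fin d), hkey, add_zero]
  split_ifs with h1 h2 h2
  · simp
  · exact absurd (hiff.mp h1) h2
  · exact absurd (hiff.mpr h2) h1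
  · simp

lemma Dmat_adj (d : ℕ) [NeZero d] (l m : ℕ) :
    (Dmat d l m)ᴴ = ((starRingEnd ℂ) (Complex.exp (-((Real.pi : ℂ) * Complex.I * (l : ℂ) * (m : ℂ) / (d : ℂ))))
        * hwω d ^ (-((((d-1)*l : ℕ):ℤ) * ((d-1)*m : ℕ))))
      • (Zmat d ^ ((d-1)*l) * Xmat d ^ ((d-1)*m)) := by
  unfold Dmat
  rw [Matrix.conjTranspose_smul, Matrix.conjTranspose_mul, Zpow_conjTranspose, Xpow_conjTranspose]
  have : Xmat d ^ ((d-1)*m) * Zmat d ^ ((d-1)*l)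
      = (Zmat d ^ 0 * Xmat d ^ ((d-1)*m)) * (Zmat d ^ ((d-1)*l) * Xmat d ^ 0) := by
    simp
  rw [this, ZXmul]
  simp only [zero_add, add_zero, smul_smul]
  rfl

lemma hwω_eq_neg_one (d : ℕ) [NeZero d] (e : ℤ) (n : ℕ)
    (he : 2 * e = d * (2 * n + 1) ∨ 2 * e = -(d * (2 * n + 1))) : hwω d ^ e = -1 := by
  have hd : (d:ℂ) ≠ 0 := Nat.cast_ne_zero.mpr (NeZero.ne d)
  rw [hwω_zpow]
  rcases he with he | he
  · have harg : (e:ℂ) * (2 * (Real.pi:ℂ) * Complex.I / d)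
        = ((2*n+1 : ℤ) : ℂ) * ((Real.pi:ℂ) * Complex.I) := by
      have h2 : ((2*e : ℤ):ℂ) = ((d * (2*n+1) : ℤ):ℂ) := by rw [he]
      push_cast at h2 ⊢
      field_simp
      linear_combination h2
    rw [harg, Complex.exp_int_mul, Complex.exp_pi_mul_I]
    exact Odd.neg_one_zpow ⟨n, by ring⟩
  · have harg : (e:ℂ) * (2 * (Real.pi:ℂ) * Complex.I / d)
        = ((-(2*n+1) : ℤ) : ℂ) * ((Real.pi:ℂ) * Complex.I) := by
      have h2 : ((2*e : ℤ):ℂ) = ((-(d * (2*n+1)) : ℤ):ℂ) := by rw [he]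
      push_cast at h2 ⊢
      field_simp
      linear_combination h2
    rw [harg, Complex.exp_int_mul, Complex.exp_pi_mul_I]
    exact Odd.neg_one_zpow ⟨-(n:ℤ)-1, by ring⟩

lemma ampCross_eq (d : ℕ) [NeZero d] (l m l' m' : ℕ) :
    ampCross d l m l' m' = Real.pi / d * ((l:ℝ) * (m':ℝ) - (m:ℝ) * (l':ℝ)) := by
  unfold ampCross amp
  have hs : Real.sqrt (Real.pi / d) * Real.sqrt (Real.pi / d) = Real.pi / d :=
    Real.mul_self_sqrt (by positivity)
  simp only [_root_.map_mul, Complex.conj_ofReal, map_add, map_natCast, Complex.conj_I, _root_.map_mul]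
  simp [Complex.mul_im, Complex.mul_re]
  have hd0 : (0:ℝ) < d := by exact_mod_cast (NeZero.pos d)
  have h12 : Real.sqrt Real.pi ^ 2 * ((Real.sqrt (d:ℝ))⁻¹) ^ 2 = Real.pi * ((d:ℝ))⁻¹ := by
    rw [Real.sq_sqrt Real.pi_pos.le, inv_pow, Real.sq_sqrt hd0.le]
  ring_nf
  linear_combination ((l:ℝ) * (m':ℝ) - (m:ℝ) * (l':ℝ)) * h12

/-- If `|α × α'| = (π/2)(2n+1)` for some `n ∈ ℕ`, then the corresponding
Heisenberg–Weyl observables anticommute. -/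
theorem HW_anticommute_of_cross (d : ℕ) [NeZero d] (l m l' m' : Fin d) (n : ℕ)
    (h : |ampCross d l m l' m'| = Real.pi / 2 * (2 * n + 1)) :
    Qmat d l m * Qmat d l' m' + Qmat d l' m' * Qmat d l m = 0 := by
  have hd1 : 1 ≤ d := NeZero.pos d
  set a : ℕ := (l : ℕ)
  set b : ℕ := (m : ℕ)
  set a' : ℕ := (l' : ℕ)
  set b' : ℕ := (m' : ℕ)
  -- step 1 : the integer cross product
  have habs : 2 * |(a:ℤ) * b' - (b:ℤ) * a'| = (d:ℤ) * (2 * n + 1) := by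
    rw [ampCross_eq] at h
    have hπ := Real.pi_pos
    have hd0 : (0:ℝ) < d := by exact_mod_cast hd1
    have h' : Real.pi / d * |(a:ℝ) * b' - (b:ℝ) * a'| = Real.pi / 2 * (2 * n + 1) := by
      rw [← h, abs_mul]
      congr 1
      exact (abs_of_pos (by positivity)).symm
    have h'' : 2 * |(a:ℝ) * b' - (b:ℝ) * a'| = (d:ℝ) * (2 * n + 1) := by
      field_simp at h'
      nlinarith [h']
    have := h''
    rw [show |(a:ℝ) * b' - (b:ℝ) * a'| = (((|(a:ℤ) * b' - (b:ℤ) * a'| : ℤ)) : ℝ) by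
      rw [Int.cast_abs]; norm_cast] at this
    exact_mod_cast this
  -- step 2 : base phases
  have hbase : hwω d ^ ((a:ℤ) * b' - (b:ℤ) * a') = -1 := by
    apply hwω_eq_neg_one d _ n
    rcases abs_cases ((a:ℤ) * b' - (b:ℤ) * a') with ⟨h1, _⟩ | ⟨h1, _⟩
    · left; rw [← h1]; linarith [habs]
    · right; rw [show -((d:ℤ) * (2 * n + 1)) = -(2 * |(a:ℤ) * b' - (b:ℤ) * a'|) by rw [habs]]
      rw [h1]; ring
  have hbaseneg : hwω d ^ ((b:ℤ) * a' - (a:ℤ) * b') = -1 := by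
    apply hwω_eq_neg_one d _ n
    rcases abs_cases ((a:ℤ) * b' - (b:ℤ) * a') with ⟨h1, _⟩ | ⟨h1, _⟩
    · right; rw [show -((d:ℤ) * (2 * n + 1)) = -(2 * |(a:ℤ) * b' - (b:ℤ) * a'|) by rw [habs]]
      rw [h1]; ring
    · left; rw [← habs, h1]; ring
  -- step 3 : the four phase conditions
  have hc1 : hwω d ^ ((a:ℤ) * b' - (a':ℤ) * b) = -1 := by
    rw [show (a:ℤ) * b' - (a':ℤ) * b = (a:ℤ) * b' - (b:ℤ) * a' by ring]
    exact hbase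
  have hc2 : hwω d ^ ((a:ℤ) * (((d-1) * b' : ℕ):ℤ) - ((((d-1) * a' : ℕ)):ℤ) * b) = -1 := by
    rw [hwω_congr d (x := (a:ℤ) * (((d-1) * b' : ℕ):ℤ) - ((((d-1) * a' : ℕ)):ℤ) * b)
      (y := (b:ℤ) * a' - (a:ℤ) * b') ?_]
    · exact hbaseneg
    · refine ⟨(a:ℤ) * b' - (a':ℤ) * b, ?_⟩
      push_cast [Nat.cast_sub hd1]
      ring
  have hc3 : hwω d ^ (((((d-1) * a : ℕ)):ℤ) * b' - (a':ℤ) * (((d-1) * b : ℕ):ℤ)) = -1 := by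
    rw [hwω_congr d (x := ((((d-1) * a : ℕ)):ℤ) * b' - (a':ℤ) * (((d-1) * b : ℕ):ℤ))
      (y := (b:ℤ) * a' - (a:ℤ) * b') ?_]
    · exact hbaseneg
    · refine ⟨(a:ℤ) * b' - (a':ℤ) * b, ?_⟩
      push_cast [Nat.cast_sub hd1]
      ring
  have hc4 : hwω d ^ (((((d-1) * a : ℕ)):ℤ) * (((d-1) * b' : ℕ):ℤ)
      - ((((d-1) * a' : ℕ)):ℤ) * (((d-1) * b : ℕ):ℤ)) = -1 := by
    rw [hwω_congr d (x := ((((d-1) * a : ℕ)):ℤ) * (((d-1) * b' : ℕ):ℤ)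
        - ((((d-1) * a' : ℕ)):ℤ) * (((d-1) * b : ℕ):ℤ))
      (y := (a:ℤ) * b' - (b:ℤ) * a') ?_]
    · exact hbase
    · refine ⟨((d:ℤ) - 2) * ((a:ℤ) * b' - (a':ℤ) * b), ?_⟩
      push_cast [Nat.cast_sub hd1]
      ring
  -- step 4 : anticommutators of the basic monomials
  have A1 := ZX_anticomm d a b a' b' hc1
  have A2 := ZX_anticomm d a b ((d-1) * a') ((d-1) * b') hc2
  have A3 := ZX_anticomm d ((d-1) * a) ((d-1) * b) a' b' hc3
  have A4 := ZX_anticomm d ((d-1) * a) ((d-1) * b) ((d-1) * a') ((d-1) * b') hc4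
  -- step 5 : lift to the displacement operators
  have B1 : Dmat d a b * Dmat d a' b' + Dmat d a' b' * Dmat d a b = 0 := by
    unfold Dmat; exact smul_anticomm A1 _ _
  have B2 : Dmat d a b * (Dmat d a' b')ᴴ + (Dmat d a' b')ᴴ * Dmat d a b = 0 := by
    rw [Dmat_adj]; unfold Dmat; exact smul_anticomm A2 _ _
  have B3 : (Dmat d a b)ᴴ * Dmat d a' b' + Dmat d a' b' * (Dmat d a b)ᴴ = 0 := by
    rw [Dmat_adj]; unfold Dmat; exact smul_anticomm A3 _ _
  have B4 : (Dmat d a b)ᴴ * (Dmat d a' b')ᴴ + (Dmat d a' b')ᴴ * (Dmat d a b)ᴴ = 0 := by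
    rw [Dmat_adj, Dmat_adj]; exact smul_anticomm A4 _ _
  -- step 6 : assemble
  unfold Qmat
  have expand : ∀ (A B A' B' : Matrix (Fin d) (Fin d) ℂ),
      (A + B) * (A' + B') + (A' + B') * (A + B)
        = (A * A' + A' * A) + ((A * B' + B' * A) + ((B * A' + A' * B) + (B * B' + B' * B))) := by
    intros; noncomm_ring
  rw [expand, smul_anticomm B1 ((1 + Complex.I)/2) ((1 + Complex.I)/2),
    smul_anticomm B2 ((1 + Complex.I)/2) ((1 - Complex.I)/2),
    smul_anticomm B3 ((1 - Complex.I)/2) ((1 + Complex.I)/2),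
    smul_anticomm B4 ((1 - Complex.I)/2) ((1 - Complex.I)/2)]
  simp
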